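/- For every integer t ≥ 2, the identity ζ_t(0|z) + ζ_{t−1}(0|z) = −(ζ_{t−1}(0))(B)(z) holds in ℚ[z], where for a polynomial f(z) = Σ_n a_n z^n one defines f(B)(z) := Σ_n a_n · B_{n+1}(z)/(n+1) (the ℚ-linear map sending z^n to B_{n+1}(z)/(n+1)), and ζ_m(0|z) denotes the depth-m normalized multiple Bernoulli polynomial with all entries zero. -/

import Mathlib

open Polynomial

/-- Auxiliary: normalized multiple Bernoulli polynomial of the reversed tuple,
defined by the recursion of the paper (acting on the last two entries, which are
at the front of the reversed list). -/
noncomputable def nmbpRev : List ℕ → ℚ[X]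
  | [] => 1
  | [k] => -(C ((k + 1 : ℚ)⁻¹)) * Polynomial.bernoulli (k + 1)
  | kr :: km :: rest =>
      -(C ((kr + 1 : ℚ)⁻¹)) * nmbpRev ((km + kr + 1) :: rest)
        - C (1 / 2 : ℚ) * nmbpRev ((km + kr) :: rest)
        + ∑ q ∈ Finset.Icc 1 kr,
            C ((ascPochhammer ℚ q).eval (-(kr : ℚ))
                * _root_.bernoulli (q + 1) / ((q + 1).factorial : ℚ)) *
              nmbpRev ((km + kr - q) :: rest)
  termination_by l => l.length
  decreasing_by all_goals simp

/-- The normalized multiple Bernoulli polynomial `ζ(−k₁,…,−k_r|z) ∈ ℚ[z]`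
(the empty tuple gives the constant polynomial `1`). -/
noncomputable def nmbp (l : List ℕ) : ℚ[X] := nmbpRev l.reverse
/-- The `ℚ`-linear transform `f(z) = Σ_n a_n z^n ↦ f(B)(z) := Σ_n a_n·B_{n+1}(z)/(n+1)`
sending `z^n` to `B_{n+1}(z)/(n+1)`. -/
noncomputable def bernoulliTransform (f : ℚ[X]) : ℚ[X] :=
  f.sum fun n a => C (a * ((n : ℚ) + 1)⁻¹) * Polynomial.bernoulli (n + 1)

/-! ### Auxiliary machinery -/

section Aux

open Finset

/-- unfolding lemma -/
lemma nmbpRev_cons_cons (kr km : ℕ) (rest : List ℕ) :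
    nmbpRev (kr :: km :: rest) =
      -(C ((kr + 1 : ℚ)⁻¹)) * nmbpRev ((km + kr + 1) :: rest)
        - C (1 / 2 : ℚ) * nmbpRev ((km + kr) :: rest)
        + ∑ q ∈ Finset.Icc 1 kr,
            C ((ascPochhammer ℚ q).eval (-(kr : ℚ))
                * _root_.bernoulli (q + 1) / ((q + 1).factorial : ℚ)) *
              nmbpRev ((km + kr - q) :: rest) := by
  rw [nmbpRev]

lemma nmbpRev_single (k : ℕ) :
    nmbpRev [k] = -(C ((k + 1 : ℚ)⁻¹)) * Polynomial.bernoulli (k + 1) := by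
  rw [nmbpRev]

/-- the functional `∫₀¹` on `ℚ[X]`. -/
noncomputable def Iop : ℚ[X] →ₗ[ℚ] ℚ :=
  Polynomial.lsum (fun n => ((n : ℚ) + 1)⁻¹ • LinearMap.id)

lemma Iop_monomial (n : ℕ) (a : ℚ) : Iop (monomial n a) = ((n : ℚ) + 1)⁻¹ * a := by
  simp [Iop, Polynomial.lsum_apply, Polynomial.sum_monomial_index]

lemma Iop_C (c : ℚ) : Iop (C c) = c := by
  rw [← Polynomial.monomial_zero_left, Iop_monomial]; simp

lemma Iop_C_mul (c : ℚ) (p : ℚ[X]) : Iop (C c * p) = c * Iop p := by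
  rw [← smul_eq_C_mul, map_smul, smul_eq_mul]

lemma Iop_derivative (g : ℚ[X]) : Iop (derivative g) = g.eval 1 - g.eval 0 := by
  induction g using Polynomial.induction_on' with
  | add p q hp hq => simp [hp, hq]; ring
  | monomial n a =>
    rw [derivative_monomial, Iop_monomial]
    cases n with
    | zero => simp
    | succ s => push_cast; field_simp; simp

lemma Iop_bernoulli (n : ℕ) : Iop (Polynomial.bernoulli (n + 1)) = 0 := by
  have hd := Polynomial.derivative_bernoulli_add_one (n + 1)
  have h1 : Iop (derivative (Polynomial.bernoulli (n + 1 + 1))) = 0 := by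
    rw [Iop_derivative, Polynomial.bernoulli_eval_one, Polynomial.bernoulli_eval_zero,
      _root_.bernoulli_eq_bernoulli'_of_ne_one (by omega), sub_self]
  rw [hd] at h1
  have h2 : (((n + 1 : ℕ) : ℚ[X]) + 1) = C ((n : ℚ) + 2) := by
    simp only [← C_eq_natCast, ← C_1, ← C_add]
    push_cast; ring_nf
  rw [h2, Iop_C_mul] at h1
  have h3 : ((n : ℚ) + 2) ≠ 0 := by positivity
  exact (mul_eq_zero.mp h1).resolve_left h3

/-- `Iop` vanishes on every (nonempty) normalized multiple Bernoulli polynomial. -/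
lemma Iop_nmbpRev : ∀ (l : List ℕ) (k : ℕ), Iop (nmbpRev (k :: l)) = 0
  | [], k => by
    rw [nmbpRev_single, neg_mul, map_neg, Iop_C_mul, Iop_bernoulli, mul_zero, neg_zero]
  | km :: rest, k => by
    rw [nmbpRev_cons_cons, map_add, map_sub, neg_mul, map_neg, Iop_C_mul, Iop_C_mul,
      map_sum]
    rw [Iop_nmbpRev rest (km + k + 1), Iop_nmbpRev rest (km + k)]
    simp only [mul_zero, neg_zero, sub_zero, zero_add]
    refine Finset.sum_eq_zero fun q _ => ?_
    rw [Iop_C_mul, Iop_nmbpRev rest (km + k - q), mul_zero]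
  termination_by l => l.length

/-- the difference operator `f(z) ↦ f(z+1) − f(z)`. -/
noncomputable def dOp (p : ℚ[X]) : ℚ[X] := p.comp (X + 1) - p

lemma dOp_add (p q : ℚ[X]) : dOp (p + q) = dOp p + dOp q := by
  simp only [dOp, add_comp]; ring

lemma dOp_sub (p q : ℚ[X]) : dOp (p - q) = dOp p - dOp q := by
  simp only [dOp, sub_comp]; ring

lemma dOp_neg (p : ℚ[X]) : dOp (-p) = -dOp p := by
  simp only [dOp, neg_comp]; ring

lemma dOp_C_mul (c : ℚ) (p : ℚ[X]) : dOp (C c * p) = C c * dOp p := by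
  simp only [dOp, mul_comp, C_comp]; ring

lemma comp_finset_sum {ι : Type*} (s : Finset ι) (f : ι → ℚ[X]) (q : ℚ[X]) :
    (∑ i ∈ s, f i).comp q = ∑ i ∈ s, (f i).comp q := by
  simp [Polynomial.comp, Polynomial.eval₂_finset_sum]

lemma dOp_sum {ι : Type*} (s : Finset ι) (f : ι → ℚ[X]) :
    dOp (∑ i ∈ s, f i) = ∑ i ∈ s, dOp (f i) := by
  simp [dOp, comp_finset_sum, Finset.sum_sub_distrib]

/-- Bernoulli polynomial composed with `X+1`. -/
lemma bern_comp (n : ℕ) : (Polynomial.bernoulli n).comp (X + 1) =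
    Polynomial.bernoulli n + (n : ℚ[X]) * X ^ (n - 1) := by
  apply Polynomial.funext
  intro r
  simp only [eval_comp, eval_add, eval_X, eval_one, eval_mul, eval_natCast, eval_pow]
  rw [add_comm r 1, Polynomial.bernoulli_eval_one_add]

lemma dOp_bernoulliTransform (f : ℚ[X]) : dOp (bernoulliTransform f) = f := by
  unfold bernoulliTransform
  rw [Polynomial.sum_def, dOp_sum]
  have h : ∀ n ∈ f.support, dOp (C (f.coeff n * ((n : ℚ) + 1)⁻¹)
      * Polynomial.bernoulli (n + 1)) = C (f.coeff n) * X ^ n := by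
    intro n _
    rw [dOp_C_mul]
    have : dOp (Polynomial.bernoulli (n + 1)) = C ((n : ℚ) + 1) * X ^ n := by
      rw [dOp, bern_comp, add_sub_cancel_left]
      have h : ((n + 1 : ℕ) : ℚ[X]) = C ((n : ℚ) + 1) := by
        simp only [← C_eq_natCast]; push_cast; ring_nf
      rw [h, Nat.add_sub_cancel]
    rw [this, ← mul_assoc, ← C_mul]
    congr 2
    field_simp
  rw [Finset.sum_congr rfl h]
  conv_rhs => rw [← Polynomial.sum_C_mul_X_pow_eq f]
  rw [Polynomial.sum_def]

lemma Iop_bernoulliTransform (f : ℚ[X]) : Iop (bernoulliTransform f) = 0 := by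
  unfold bernoulliTransform
  rw [Polynomial.sum_def, map_sum]
  refine Finset.sum_eq_zero fun n _ => ?_
  rw [Iop_C_mul, Iop_bernoulli, mul_zero]

/-- A polynomial invariant under `X ↦ X+1` is constant. -/
lemma const_of_dOp_eq_zero {g : ℚ[X]} (h : dOp g = 0) : g = C (g.eval 0) := by
  have hc : g.comp (X + 1) = g := by
    have := sub_eq_zero.mp h
    exact this
  have heval : ∀ x : ℚ, g.eval (x + 1) = g.eval x := by
    intro x
    conv_rhs => rw [← hc]
    simp [eval_comp]
  have hnat : ∀ n : ℕ, g.eval (n : ℚ) = g.eval 0 := by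
    intro n
    induction n with
    | zero => simp
    | succ m ih => push_cast; rw [heval, ih]
  have hroot : (g - C (g.eval 0)) = 0 := by
    apply Polynomial.eq_zero_of_infinite_isRoot
    apply Set.Infinite.mono (s := Set.range ((↑) : ℕ → ℚ))
    · rintro x ⟨n, rfl⟩
      simp [Polynomial.IsRoot, hnat n]
    · exact Set.infinite_range_of_injective Nat.cast_injective
  linear_combination (norm := ring_nf) hroot

/-- Characterization of the Bernoulli transform. -/
lemma eq_bernoulliTransform_of {f g : ℚ[X]} (hd : dOp g = f) (hI : Iop g = 0) :
    g = bernoulliTransform f := by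
  set h := g - bernoulliTransform f with hh
  have hdh : dOp h = 0 := by
    rw [hh, dOp_sub, hd, dOp_bernoulliTransform, sub_self]
  have hconst := const_of_dOp_eq_zero hdh
  have hIh : Iop h = 0 := by
    rw [hh, map_sub, hI, Iop_bernoulliTransform, sub_zero]
  rw [hconst, Iop_C] at hIh
  have : h = 0 := by rw [hconst, hIh, map_zero]
  linear_combination (norm := ring_nf) this - hh

/-- The coefficient identity for the recursion coefficients. -/
lemma coeff_eq (a q : ℕ) (hq : 1 ≤ q) (hqa : q ≤ a) :
    ((a : ℚ) + 1) * ((ascPochhammer ℚ q).eval (-(a : ℚ))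
        * _root_.bernoulli (q + 1) / ((q + 1).factorial : ℚ))
      = -((((a + 1).choose (q + 1)) : ℚ) * _root_.bernoulli (q + 1)) := by
  rw [ascPochhammer_eval_neg_eq_descPochhammer]
  rw [show ((a : ℚ)) = ((a : ℕ) : ℚ) from rfl, descPochhammer_eval_eq_descFactorial]
  rcases Nat.even_or_odd q with he | ho
  · -- q even, q ≥ 1 hence q+1 odd and ≥ 3 (q ≥ 2), bernoulli (q+1) = 0
    have hq2 : 2 ≤ q := by
      rcases he with ⟨r, hr⟩; omega
    have : _root_.bernoulli (q + 1) = 0 := by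
      rw [_root_.bernoulli_eq_bernoulli'_of_ne_one (by omega)]
      exact bernoulli'_eq_zero_of_odd (Even.add_one he) (by omega)
    simp [this]
  · -- q odd
    have hpow : ((-1 : ℚ)) ^ q = -1 := Odd.neg_one_pow ho
    rw [hpow]
    have hfact : ((a : ℚ) + 1) * (a.descFactorial q : ℚ)
        = (((q + 1).factorial : ℚ)) * (((a + 1).choose (q + 1)) : ℚ) := by
      have hn : (a + 1) * a.descFactorial q = (q + 1).factorial * (a + 1).choose (q + 1) := by
        rw [← Nat.succ_descFactorial_succ, Nat.descFactorial_eq_factorial_mul_choose]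
      exact_mod_cast congrArg (fun x : ℕ => (x : ℚ)) hn
    have hfne : (((q + 1).factorial : ℚ)) ≠ 0 := by
      exact_mod_cast (q + 1).factorial_ne_zero
    field_simp
    linear_combination (-_root_.bernoulli (q + 1)) * hfact

/-- Expansion of the Bernoulli polynomial matching the recursion coefficients. -/
lemma bernoulli_expand (a : ℕ) :
    Polynomial.bernoulli (a + 1) = X ^ (a + 1) - C (((a : ℚ) + 1) / 2) * X ^ a
      + ∑ q ∈ Finset.Icc 1 a,
          C ((((a + 1).choose (q + 1)) : ℚ) * _root_.bernoulli (q + 1)) * X ^ (a - q) := by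
  rw [Polynomial.bernoulli]
  rw [Finset.sum_range_succ', Finset.sum_range_succ']
  have h0 : Polynomial.monomial (a + 1 - 0) (_root_.bernoulli 0 * ((a + 1).choose 0 : ℚ))
      = X ^ (a + 1) := by
    simp [Polynomial.X_pow_eq_monomial]
  have h1 : Polynomial.monomial (a + 1 - (0 + 1)) (_root_.bernoulli (0 + 1)
      * ((a + 1).choose (0 + 1) : ℚ)) = -(C (((a : ℚ) + 1) / 2) * X ^ a) := by
    have he : a + 1 - (0 + 1) = a := by omega
    rw [he, Polynomial.C_mul_X_pow_eq_monomial, ← map_neg]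
    congr 1
    norm_num [_root_.bernoulli_one]
    push_cast
    ring
  rw [h0, h1]
  have h2 : ∑ i ∈ Finset.range a, Polynomial.monomial (a + 1 - (i + 1 + 1))
        (_root_.bernoulli (i + 1 + 1) * ((a + 1).choose (i + 1 + 1) : ℚ))
      = ∑ q ∈ Finset.Icc 1 a,
          C ((((a + 1).choose (q + 1)) : ℚ) * _root_.bernoulli (q + 1)) * X ^ (a - q) := by
    rw [← Finset.Ico_add_one_right_eq_Icc, Finset.sum_Ico_eq_sum_range]
    refine Finset.sum_congr (by congr 1) fun i _ => ?_
    rw [Polynomial.C_mul_X_pow_eq_monomial, show (1:ℕ) + i = i + 1 from Nat.add_comm 1 i,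
      show a - (i + 1) = a + 1 - (i + 1 + 1) by omega]
    exact congrArg _ (mul_comm _ _)
  rw [h2]
  ring

/-- Expansion with the raw recursion coefficients. -/
lemma bernoulli_expand' (a : ℕ) :
    Polynomial.bernoulli (a + 1) = X ^ (a + 1) - C (((a : ℚ) + 1) / 2) * X ^ a
      - C ((a : ℚ) + 1) * ∑ q ∈ Finset.Icc 1 a,
          C ((ascPochhammer ℚ q).eval (-(a : ℚ))
              * _root_.bernoulli (q + 1) / ((q + 1).factorial : ℚ)) * X ^ (a - q) := by
  rw [bernoulli_expand]
  have h : ∑ q ∈ Finset.Icc 1 a,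
        C ((((a + 1).choose (q + 1)) : ℚ) * _root_.bernoulli (q + 1)) * X ^ (a - q)
      = -(C ((a : ℚ) + 1) * ∑ q ∈ Finset.Icc 1 a,
          C ((ascPochhammer ℚ q).eval (-(a : ℚ))
              * _root_.bernoulli (q + 1) / ((q + 1).factorial : ℚ)) * X ^ (a - q)) := by
    rw [Finset.mul_sum, ← Finset.sum_neg_distrib]
    refine Finset.sum_congr rfl fun q hq => ?_
    rw [Finset.mem_Icc] at hq
    have hc := coeff_eq a q hq.1 hq.2
    have : ((((a + 1).choose (q + 1)) : ℚ) * _root_.bernoulli (q + 1))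
        = -(((a : ℚ) + 1) * ((ascPochhammer ℚ q).eval (-(a : ℚ))
            * _root_.bernoulli (q + 1) / ((q + 1).factorial : ℚ))) := by
      linear_combination hc
    rw [this, map_neg, map_mul]
    ring
  rw [h]
  ring

/-- Difference of a depth-1 polynomial. -/
lemma dOp_nmbpRev_single (k : ℕ) : dOp (nmbpRev [k]) = -X ^ k := by
  rw [nmbpRev_single, neg_mul, dOp_neg, dOp_C_mul, dOp, bern_comp, add_sub_cancel_left]
  have h2 : ((k + 1 : ℕ) : ℚ[X]) = C ((k : ℚ) + 1) := by
    simp only [← C_eq_natCast]; push_cast; ring_nf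
  have h3 : ((k : ℚ) + 1) ≠ 0 := by positivity
  rw [h2, Nat.add_sub_cancel, ← mul_assoc, ← C_mul, inv_mul_cancel₀ h3, C_1, one_mul]

/-- The key difference equation for the normalized multiple Bernoulli polynomials. -/
lemma dOp_nmbpRev : ∀ (l : List ℕ) (k : ℕ),
    dOp (nmbpRev (l ++ [k])) = -X ^ k * (nmbpRev l).comp (X + 1)
  | [], k => by
    rw [List.nil_append, dOp_nmbpRev_single]
    rw [nmbpRev]
    simp
  | [a], k => by
    rw [show ([a] ++ [k]) = a :: k :: [] from rfl, nmbpRev_cons_cons, neg_mul]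
    rw [dOp_add, dOp_sub, dOp_neg, dOp_C_mul, dOp_C_mul, dOp_sum]
    rw [dOp_nmbpRev_single, dOp_nmbpRev_single]
    have hsum : ∀ q ∈ Finset.Icc 1 a,
        dOp (C ((ascPochhammer ℚ q).eval (-(a : ℚ))
            * _root_.bernoulli (q + 1) / ((q + 1).factorial : ℚ)) * nmbpRev [k + a - q])
        = C ((ascPochhammer ℚ q).eval (-(a : ℚ))
            * _root_.bernoulli (q + 1) / ((q + 1).factorial : ℚ)) * (-X ^ (k + a - q)) := by
      intro q _
      rw [dOp_C_mul, dOp_nmbpRev_single]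
    rw [Finset.sum_congr rfl hsum]
    -- now expand RHS
    simp only [nmbpRev_single, neg_mul, mul_comp, neg_comp, C_comp]
    rw [bern_comp, ← C_eq_natCast, Nat.add_sub_cancel]
    have hcast : ((((a + 1 : ℕ)) : ℚ)) = (a : ℚ) + 1 := by push_cast; ring
    rw [hcast, bernoulli_expand']
    have hS : (∑ q ∈ Finset.Icc 1 a,
          C ((ascPochhammer ℚ q).eval (-(a : ℚ))
              * _root_.bernoulli (q + 1) / ((q + 1).factorial : ℚ)) * -X ^ (k + a - q))
        = -(X ^ k * ∑ q ∈ Finset.Icc 1 a,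
          C ((ascPochhammer ℚ q).eval (-(a : ℚ))
              * _root_.bernoulli (q + 1) / ((q + 1).factorial : ℚ)) * X ^ (a - q)) := by
      rw [Finset.mul_sum, ← Finset.sum_neg_distrib]
      refine Finset.sum_congr rfl fun q hq => ?_
      rw [Finset.mem_Icc] at hq
      rw [show k + a - q = k + (a - q) by omega, pow_add]
      ring
    rw [hS]
    set S := ∑ q ∈ Finset.Icc 1 a,
        C ((ascPochhammer ℚ q).eval (-(a : ℚ))
            * _root_.bernoulli (q + 1) / ((q + 1).factorial : ℚ)) * X ^ (a - q) with hSdef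
    have h3 : ((a : ℚ) + 1) ≠ 0 := by positivity
    have hu : C ((a : ℚ) + 1)⁻¹ * C ((a : ℚ) + 1) = (1 : ℚ[X]) := by
      rw [← map_mul, inv_mul_cancel₀ h3, map_one]
    have hhalf : (C ((1:ℚ)/2) * 2 : ℚ[X]) = 1 := by
      rw [show (2 : ℚ[X]) = C 2 from (map_ofNat C 2).symm, ← map_mul]
      norm_num
    have hud : C (((a : ℚ) + 1)/2) = C ((a : ℚ) + 1) * C ((1:ℚ)/2) := by
      rw [← map_mul]; congr 1; ring
    have hp1 : (X : ℚ[X]) ^ (k + a + 1) = X ^ k * X ^ (a + 1) := by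
      rw [show k + a + 1 = k + (a + 1) by omega, pow_add]
    have hp2 : (X : ℚ[X]) ^ (k + a) = X ^ k * X ^ a := pow_add X k a
    rw [hud, hp1, hp2]
    linear_combination (norm := ring)
      (-(X ^ k * X ^ a - C ((1:ℚ)/2) * X ^ k * X ^ a - X ^ k * S)) * hu
        + (X ^ k * X ^ a) * hhalf
  | a :: b :: l', k => by
    rw [show ((a :: b :: l') ++ [k]) = a :: b :: (l' ++ [k]) from rfl, nmbpRev_cons_cons,
      neg_mul]
    rw [dOp_add, dOp_sub, dOp_neg, dOp_C_mul, dOp_C_mul, dOp_sum]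
    rw [show (b + a + 1) :: (l' ++ [k]) = ((b + a + 1) :: l') ++ [k] from rfl,
      dOp_nmbpRev ((b + a + 1) :: l') k]
    rw [show (b + a) :: (l' ++ [k]) = ((b + a) :: l') ++ [k] from rfl,
      dOp_nmbpRev ((b + a) :: l') k]
    have hsum : ∀ q ∈ Finset.Icc 1 a,
        dOp (C ((ascPochhammer ℚ q).eval (-(a : ℚ))
            * _root_.bernoulli (q + 1) / ((q + 1).factorial : ℚ))
          * nmbpRev ((b + a - q) :: (l' ++ [k])))
        = C ((ascPochhammer ℚ q).eval (-(a : ℚ))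
            * _root_.bernoulli (q + 1) / ((q + 1).factorial : ℚ))
          * (-X ^ k * (nmbpRev ((b + a - q) :: l')).comp (X + 1)) := by
      intro q _
      rw [dOp_C_mul, show (b + a - q) :: (l' ++ [k]) = ((b + a - q) :: l') ++ [k] from rfl,
        dOp_nmbpRev ((b + a - q) :: l') k]
    rw [Finset.sum_congr rfl hsum]
    -- expand the RHS
    rw [nmbpRev_cons_cons a b l']
    simp only [neg_mul, sub_comp, add_comp, mul_comp, neg_comp, C_comp, comp_finset_sum]
    have hmatch : (∑ q ∈ Finset.Icc 1 a,
          C ((ascPochhammer ℚ q).eval (-(a : ℚ))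
              * _root_.bernoulli (q + 1) / ((q + 1).factorial : ℚ))
            * -(X ^ k * (nmbpRev ((b + a - q) :: l')).comp (X + 1)))
        = -(X ^ k * ∑ q ∈ Finset.Icc 1 a,
          C ((ascPochhammer ℚ q).eval (-(a : ℚ))
              * _root_.bernoulli (q + 1) / ((q + 1).factorial : ℚ))
            * (nmbpRev ((b + a - q) :: l')).comp (X + 1)) := by
      rw [Finset.mul_sum, ← Finset.sum_neg_distrib]
      exact Finset.sum_congr rfl fun q _ => by ring
    rw [hmatch]
    ring
  termination_by l => l.length

/-! ### All-zero tuples -/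

/-- `Am m = ζ_{m+1}(0|z)` (reversed list form). -/
noncomputable def Am (m : ℕ) : ℚ[X] := nmbpRev (List.replicate (m + 1) 0)

/-- `Bm m = ζ(0,…,0,−1|z)`-type auxiliary polynomial. -/
noncomputable def Bm (m : ℕ) : ℚ[X] := nmbpRev (1 :: List.replicate m 0)

lemma dOp_Am_succ (m : ℕ) : dOp (Am (m + 1)) = -(Am m).comp (X + 1) := by
  have h : List.replicate (m + 1 + 1) (0:ℕ) = List.replicate (m + 1) 0 ++ [0] :=
    List.replicate_succ'
  rw [Am, Am, h, dOp_nmbpRev]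
  simp

lemma dOp_Bm_succ (m : ℕ) : dOp (Bm (m + 1)) = -(Bm m).comp (X + 1) := by
  have h : (1 :: List.replicate (m + 1) (0:ℕ)) = (1 :: List.replicate m 0) ++ [0] := by
    rw [List.replicate_succ' (n := m) (a := (0:ℕ))]
    rfl
  rw [Bm, Bm, h, dOp_nmbpRev]
  simp

lemma dOp_Am_zero : dOp (Am 0) = -1 := by
  have : Am 0 = nmbpRev ([] ++ [0]) := rfl
  rw [this, dOp_nmbpRev]
  rw [nmbpRev]
  simp

lemma dOp_Bm_zero : dOp (Bm 0) = -X := by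
  have : Bm 0 = nmbpRev ([] ++ [1]) := rfl
  rw [this, dOp_nmbpRev]
  rw [nmbpRev]
  simp

lemma C_half_two : (C ((1:ℚ)/2) * 2 : ℚ[X]) = 1 := by
  rw [show (2 : ℚ[X]) = C 2 from (map_ofNat C 2).symm, ← map_mul]
  norm_num

lemma bernoulli_poly_one : Polynomial.bernoulli 1 = X - C (1/2 : ℚ) := by
  rw [Polynomial.bernoulli, Finset.sum_range_succ, Finset.sum_range_one]
  rw [_root_.bernoulli_one, _root_.bernoulli_zero]
  norm_num
  rw [Polynomial.monomial_one_one_eq_X]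
  ring

lemma Am_zero : Am 0 = -X + C (1/2 : ℚ) := by
  rw [Am, show List.replicate 1 (0:ℕ) = [0] from rfl, nmbpRev_single, bernoulli_poly_one]
  norm_num
  ring

/-- The recursion for all-zero tuples. -/
lemma Am_succ (m : ℕ) : Am (m + 1) = -Bm m - C (1/2 : ℚ) * Am m := by
  rw [Am, Am, Bm, show List.replicate (m + 1 + 1) (0:ℕ) = 0 :: 0 :: List.replicate m 0 from rfl,
    show List.replicate (m + 1) (0:ℕ) = 0 :: List.replicate m 0 from rfl,
    nmbpRev_cons_cons]
  norm_num

lemma Iop_Am (m : ℕ) : Iop (Am m) = 0 := by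
  rw [Am, show List.replicate (m + 1) (0:ℕ) = 0 :: List.replicate m 0 from rfl]
  exact Iop_nmbpRev _ _

lemma Iop_Bm (m : ℕ) : Iop (Bm m) = 0 := Iop_nmbpRev _ _

/-- The key identity: `ζ(0,…,0,−1|z) = (ζ_{m+1}(0))(B)(z) + ζ_{m+1}(0|z)/2`. -/
lemma key : ∀ m : ℕ, Bm m = bernoulliTransform (Am m) + C (1/2 : ℚ) * Am m := by
  intro m
  induction m with
  | zero =>
    have h := eq_bernoulliTransform_of (f := Am 0) (g := Bm 0 - C (1/2 : ℚ) * Am 0)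
      (by rw [dOp_sub, dOp_C_mul, dOp_Bm_zero, dOp_Am_zero, Am_zero]
          ring)
      (by rw [map_sub, Iop_Bm, Iop_C_mul, Iop_Am]; ring)
    linear_combination (norm := ring) h
  | succ m ih =>
    have h := eq_bernoulliTransform_of (f := Am (m + 1)) (g := Bm (m + 1) - C (1/2 : ℚ) * Am (m + 1))
      (by rw [dOp_sub, dOp_C_mul, dOp_Bm_succ, dOp_Am_succ]
          have hBT : Bm m - C (1/2 : ℚ) * Am m = bernoulliTransform (Am m) := by
            linear_combination (norm := ring) ih
          have hcomp : (-(Bm m).comp (X + 1)) - C (1/2:ℚ) * (-(Am m).comp (X + 1))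
              = -((Bm m - C (1/2:ℚ) * Am m).comp (X + 1)) := by
            rw [sub_comp, mul_comp, C_comp]
            ring
          rw [hcomp, hBT]
          have hd := dOp_bernoulliTransform (Am m)
          rw [dOp] at hd
          rw [Am_succ]
          linear_combination (norm := ring) -hd + ih + (Am m) * C_half_two)
      (by rw [map_sub, Iop_Bm, Iop_C_mul, Iop_Am]; ring)
    linear_combination (norm := ring) h

end Aux

/-- For `t ≥ 2`: `ζ_t(0|z) + ζ_{t−1}(0|z) = −(ζ_{t−1}(0))(B)(z)` in `ℚ[z]`. -/
theorem nmbp_replicate_zero_bernoulli_transform (t : ℕ) (ht : 2 ≤ t) :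
    nmbp (List.replicate t 0) + nmbp (List.replicate (t - 1) 0)
      = -bernoulliTransform (nmbp (List.replicate (t - 1) 0)) := by
  obtain ⟨m, rfl⟩ : ∃ m, t = m + 2 := ⟨t - 2, by omega⟩
  have hrev : ∀ n : ℕ, nmbp (List.replicate n 0) = nmbpRev (List.replicate n 0) := by
    intro n
    rw [nmbp, List.reverse_replicate]
  have h1 : m + 2 - 1 = m + 1 := by omega
  rw [h1, hrev, hrev]
  have hA2 : nmbpRev (List.replicate (m + 2) (0:ℕ)) = Am (m + 1) := rfl
  have hA1 : nmbpRev (List.replicate (m + 1) (0:ℕ)) = Am m := rfl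
  rw [hA2, hA1, Am_succ, key m]
  linear_combination (norm := ring) (-(Am m)) * C_half_two
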